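/- arXiv:1407.1712 — 2 statements merged into one kernel-verified Lean document; each statement's English description precedes it below -/
import Mathlib

section
/- Let d ≥ 2, ν > 0, n ≥ 1, and let f_k : ℝ → ℂ^d (defined for 0 < |k| ≤ n) be a continuous forcing. Let u be a solution of the symmetric Galerkin projection of order n of the Navier–Stokes Fourier system with forcing f, which is real and divergence-free. Then for every t, the energy E(u(t)) = Σ_{0<|k|≤n} |u_k(t)|² satisfies d/dt E(u(t)) ≤ −2ν E(u(t)) + 2 √(E(u(t))) √(E(f(t))), where E(f(t)) = Σ_{0<|k|≤n} |f_k(t)|². -/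
noncomputable section

open scoped BigOperators

/-- Euclidean norm of an integer vector `k ∈ ℤ^d ⊂ ℝ^d`. -/
def znorm {d : ℕ} (k : Fin d → ℤ) : ℝ := Real.sqrt (∑ i, ((k i : ℝ))^2)

/-- The bilinear pairing `(a·k) = Σ_j a_j k_j` of a complex vector with an integer vector. -/
def dotZ {d : ℕ} (a : EuclideanSpace ℂ (Fin d)) (k : Fin d → ℤ) : ℂ := ∑ j, a j * (k j : ℂ)

/-- Orthogonal projection `Π_k` onto the orthogonal complement of the (real) vector `k`. -/
def projP {d : ℕ} (k : Fin d → ℤ) (v : EuclideanSpace ℂ (Fin d)) : EuclideanSpace ℂ (Fin d) :=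
  WithLp.toLp 2 (fun j => v j - (dotZ v k / ((∑ i, ((k i : ℝ))^2 : ℝ) : ℂ)) * (k j : ℂ))

/-- The `k1`-th term of the Navier–Stokes nonlinearity
`N_k(u) = -i Σ_{k1 ≠ 0} (u_{k1}·k) Π_k u_{k-k1}`. -/
def Nterm {d : ℕ} (u : (Fin d → ℤ) → EuclideanSpace ℂ (Fin d)) (k k1 : Fin d → ℤ) :
    EuclideanSpace ℂ (Fin d) :=
  if k1 = 0 then 0 else (-Complex.I * dotZ (u k1) k) • projP k (u (k - k1))

/-- The Navier–Stokes nonlinearity `N_k(u)`. -/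
def Nfun {d : ℕ} (u : (Fin d → ℤ) → EuclideanSpace ℂ (Fin d)) (k : Fin d → ℤ) :
    EuclideanSpace ℂ (Fin d) := ∑' k1, Nterm u k k1

/-- Energy `E(u) = Σ_k |u_k|²`. -/
def energy {d : ℕ} (u : (Fin d → ℤ) → EuclideanSpace ℂ (Fin d)) : ℝ := ∑' k, ‖u k‖^2

/-- Enstrophy `V(u) = Σ_k |k|²|u_k|²`. -/
def enstrophy {d : ℕ} (u : (Fin d → ℤ) → EuclideanSpace ℂ (Fin d)) : ℝ :=
  ∑' k, (znorm k)^2 * ‖u k‖^2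

/-- Divergence-free: `(u_k · k) = 0` for all `k`. -/
def divFree {d : ℕ} (u : (Fin d → ℤ) → EuclideanSpace ℂ (Fin d)) : Prop :=
  ∀ k, dotZ (u k) k = 0

/-- Reality condition: `u_{-k} = conj (u_k)`. -/
def realSeq {d : ℕ} (u : (Fin d → ℤ) → EuclideanSpace ℂ (Fin d)) : Prop :=
  ∀ k j, u (-k) j = starRingEnd ℂ (u k j)

/-- RHS of the Galerkin-projected Navier–Stokes system in the Fourier domain.
(For `u` supported on modes `0 < |k| ≤ n`, the `tsum` below reduces to the finite sum
over `k1 ≠ 0`, `|k1| ≤ n`, `0 < |k-k1| ≤ n`.) -/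
def GalerkinRHS {d : ℕ} (ν : ℝ) (fk : EuclideanSpace ℂ (Fin d))
    (u : (Fin d → ℤ) → EuclideanSpace ℂ (Fin d)) (k : Fin d → ℤ) :
    EuclideanSpace ℂ (Fin d) :=
  (∑' k1, Nterm u k k1) - ((ν * (znorm k)^2 : ℝ) : ℂ) • u k + projP k fk

/-- `u : ℝ → (ℤ^d → ℂ^d)` is a solution of the symmetric Galerkin projection of order `n`
of the Navier–Stokes Fourier system with viscosity `ν` and forcing `f`. -/
def IsGalerkinSol {d : ℕ} (ν n : ℝ) (f : ℝ → (Fin d → ℤ) → EuclideanSpace ℂ (Fin d))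
    (u : ℝ → (Fin d → ℤ) → EuclideanSpace ℂ (Fin d)) : Prop :=
  (∀ t, u t 0 = 0) ∧
  (∀ t k, n < znorm k → u t k = 0) ∧
  (∀ t (k : Fin d → ℤ), k ≠ 0 → znorm k ≤ n →
    HasDerivAt (fun s => u s k) (GalerkinRHS ν (f t k) (u t) k) t)
namespace NSAux

open Finset
open scoped ComplexConjugate

variable {d : ℕ}

local notation "⟪" x ", " y "⟫" => @inner ℂ _ _ x y

lemma znorm_sq (k : Fin d → ℤ) : (znorm k)^2 = ∑ i, ((k i : ℝ))^2 :=
  Real.sq_sqrt (Finset.sum_nonneg fun i _ => sq_nonneg _)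

lemma sq_le_znorm_sq (k : Fin d → ℤ) (i : Fin d) : ((k i : ℝ))^2 ≤ (znorm k)^2 := by
  rw [znorm_sq]
  exact Finset.single_le_sum (f := fun j => ((k j : ℝ))^2) (fun j _ => sq_nonneg _)
    (Finset.mem_univ i)

lemma one_le_znorm_sq {k : Fin d → ℤ} (hk : k ≠ 0) : 1 ≤ (znorm k)^2 := by
  obtain ⟨i, hi⟩ : ∃ i, k i ≠ 0 := by
    by_contra h; push_neg at h; exact hk (funext h)
  have h1 : (1:ℝ) ≤ ((k i : ℝ))^2 := by
    have h2 : (1:ℤ) ≤ |k i| := Int.one_le_abs hi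
    have h3 : (1:ℝ) ≤ |(k i : ℝ)| := by
      rw [← Int.cast_abs]; exact_mod_cast h2
    nlinarith [sq_abs ((k i : ℝ))]
  exact h1.trans (sq_le_znorm_sq k i)

lemma znorm_nonneg (k : Fin d → ℤ) : 0 ≤ znorm k := Real.sqrt_nonneg _

/-- The box of lattice points containing all `k` with `znorm k ≤ n`. -/
def box (d : ℕ) (n : ℝ) : Finset (Fin d → ℤ) :=
  Finset.Icc (fun _ => -⌈n⌉) (fun _ => ⌈n⌉)

lemma mem_box_of_znorm_le {n : ℝ} (hn : 0 ≤ n) {k : Fin d → ℤ} (hk : znorm k ≤ n) :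
    k ∈ box d n := by
  rw [box, Finset.mem_Icc]
  have habs : ∀ i, |(k i : ℝ)| ≤ (⌈n⌉ : ℝ) := by
    intro i
    have h1 : ((k i : ℝ))^2 ≤ n^2 := by
      refine (sq_le_znorm_sq k i).trans ?_
      nlinarith [znorm_nonneg k]
    have h2 : |(k i : ℝ)| ≤ n := by nlinarith [abs_nonneg ((k i : ℝ)), sq_abs ((k i : ℝ))]
    exact h2.trans (Int.le_ceil n)
  constructor
  · intro i
    have := (abs_le.1 (habs i)).1
    exact_mod_cast this
  · intro i
    have := (abs_le.1 (habs i)).2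
    exact_mod_cast this

lemma neg_mem_box {n : ℝ} {k : Fin d → ℤ} (hk : k ∈ box d n) : -k ∈ box d n := by
  rw [box, Finset.mem_Icc] at hk ⊢
  refine ⟨fun i => ?_, fun i => ?_⟩
  · have := hk.2 i
    simpa using neg_le_neg this
  · have := hk.1 i
    simpa using neg_le_neg this

end NSAux
namespace NSAux

open Finset
open scoped ComplexConjugate

variable {d : ℕ}

local notation "⟪" x ", " y "⟫" => @inner ℂ _ _ x y

/-- The integer vector `k` viewed in `ℂ^d`. -/
def kvec (k : Fin d → ℤ) : EuclideanSpace ℂ (Fin d) := WithLp.toLp 2 (fun j => (k j : ℂ))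

lemma dotZ_zero_left (k : Fin d → ℤ) : dotZ (0 : EuclideanSpace ℂ (Fin d)) k = 0 := by
  simp [dotZ]

lemma dotZ_add_right (a : EuclideanSpace ℂ (Fin d)) (p q : Fin d → ℤ) :
    dotZ a (p + q) = dotZ a p + dotZ a q := by
  simp only [dotZ, ← Finset.sum_add_distrib]
  refine Finset.sum_congr rfl fun j _ => ?_
  have : ((p + q) j : ℂ) = (p j : ℂ) + (q j : ℂ) := by push_cast [Pi.add_apply]; ring
  rw [this]; ring

lemma dotZ_sub_right (a : EuclideanSpace ℂ (Fin d)) (p q : Fin d → ℤ) :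
    dotZ a (p - q) = dotZ a p - dotZ a q := by
  simp only [dotZ, ← Finset.sum_sub_distrib]
  refine Finset.sum_congr rfl fun j _ => ?_
  have : ((p - q) j : ℂ) = (p j : ℂ) - (q j : ℂ) := by push_cast [Pi.sub_apply]; ring
  rw [this]; ring

/-- Symmetric bilinear form `∑ j, a j * b j`. -/
def bilC (a b : EuclideanSpace ℂ (Fin d)) : ℂ := ∑ j, a j * b j

lemma bilC_comm (a b : EuclideanSpace ℂ (Fin d)) : bilC a b = bilC b a := by
  simp [bilC, mul_comm]

lemma bilC_zero_right (a : EuclideanSpace ℂ (Fin d)) : bilC a 0 = 0 := by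
  simp [bilC]

lemma inner_kvec_left (k : Fin d → ℤ) (v : EuclideanSpace ℂ (Fin d)) :
    ⟪kvec k, v⟫ = dotZ v k := by
  simp only [PiLp.inner_apply, RCLike.inner_apply, kvec, PiLp.toLp_apply, dotZ]
  refine Finset.sum_congr rfl fun j _ => ?_
  rw [map_intCast]

lemma inner_kvec_right (k : Fin d → ℤ) (v : EuclideanSpace ℂ (Fin d)) :
    ⟪v, kvec k⟫ = conj (dotZ v k) := by
  simp only [PiLp.inner_apply, RCLike.inner_apply, kvec, PiLp.toLp_apply, dotZ, map_sum, map_mul, map_intCast]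
  exact Finset.sum_congr rfl fun j _ => mul_comm _ _

lemma projP_eq (k : Fin d → ℤ) (v : EuclideanSpace ℂ (Fin d)) :
    projP k v = v - (dotZ v k / ((∑ i, ((k i : ℝ))^2 : ℝ) : ℂ)) • kvec k := by
  ext j; simp [projP, kvec]

lemma inner_projP_left {k : Fin d → ℤ} (w x : EuclideanSpace ℂ (Fin d))
    (hx : dotZ x k = 0) : ⟪projP k w, x⟫ = ⟪w, x⟫ := by
  rw [projP_eq, inner_sub_left, inner_smul_left, inner_kvec_left, hx, mul_zero, sub_zero]

lemma inner_projP_right {k : Fin d → ℤ} (x w : EuclideanSpace ℂ (Fin d))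
    (hx : dotZ x k = 0) : ⟪x, projP k w⟫ = ⟪x, w⟫ := by
  rw [projP_eq, inner_sub_right, inner_smul_right, inner_kvec_right, hx, map_zero, mul_zero,
    sub_zero]

lemma dotZ_kvec (k : Fin d → ℤ) : dotZ (kvec k) k = ((∑ i, ((k i : ℝ))^2 : ℝ) : ℂ) := by
  simp only [dotZ, kvec, PiLp.toLp_apply]
  push_cast
  refine Finset.sum_congr rfl fun j _ => by ring

lemma norm_projP_le (k : Fin d → ℤ) (v : EuclideanSpace ℂ (Fin d)) :
    ‖projP k v‖ ≤ ‖v‖ := by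
  rcases eq_or_ne k 0 with rfl | hk
  · have h : projP (0 : Fin d → ℤ) v = v := by
      ext j
      simp [projP]
    rw [h]
  · have hS : (0:ℝ) < ∑ i, ((k i : ℝ))^2 := by
      have := one_le_znorm_sq hk
      rw [znorm_sq] at this; linarith
    set S : ℝ := ∑ i, ((k i : ℝ))^2 with hSdef
    set c : ℂ := dotZ v k / (S : ℂ) with hcdef
    have hdotP : dotZ (projP k v) k = 0 := by
      have h1 : dotZ (projP k v) k = dotZ v k - c * dotZ (kvec k) k := by
        simp only [projP_eq, dotZ, PiLp.sub_apply, PiLp.smul_apply, smul_eq_mul, sub_mul,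
          Finset.sum_sub_distrib, Finset.mul_sum, mul_assoc, kvec, PiLp.toLp_apply]
        rw [hcdef, dotZ, hSdef]
      rw [h1, dotZ_kvec, hcdef, div_mul_cancel₀, sub_self]
      exact_mod_cast hS.ne'
    have hortho : ⟪projP k v, c • kvec k⟫ = 0 := by
      rw [inner_smul_right, inner_kvec_right, hdotP, map_zero, mul_zero]
    have hdecomp : v = projP k v + c • kvec k := by
      rw [projP_eq]; abel
    have hsq : ‖v‖^2 = ‖projP k v‖^2 + ‖c • kvec k‖^2 := by
      conv_lhs => rw [hdecomp]
      rw [@norm_add_sq ℂ _ _ _ _, hortho]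
      simp
    nlinarith [norm_nonneg v, norm_nonneg (projP k v), sq_nonneg ‖c • kvec k‖,
      norm_nonneg (c • kvec k)]

end NSAux
namespace NSAux

open Finset
open scoped ComplexConjugate

variable {d : ℕ}

local notation "⟪" x ", " y "⟫" => @inner ℂ _ _ x y

lemma hasDerivAt_norm_sq {w : ℝ → EuclideanSpace ℂ (Fin d)} {v : EuclideanSpace ℂ (Fin d)}
    {t : ℝ} (h : HasDerivAt w v t) :
    HasDerivAt (fun s => ‖w s‖^2) (2 * (⟪v, w t⟫).re) t := by
  have h1 := h.inner ℂ h
  have h2 := Complex.reCLM.hasFDerivAt.comp_hasDerivAt t h1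
  have h3 : (⇑Complex.reCLM ∘ fun s => ⟪w s, w s⟫) = fun s => ‖w s‖^2 := by
    funext s
    simp only [Function.comp_apply, Complex.reCLM_apply]
    exact inner_self_eq_norm_sq (𝕜 := ℂ) (w s)
  have h4 : Complex.reCLM (⟪w t, v⟫ + ⟪v, w t⟫) = 2 * (⟪v, w t⟫).re := by
    have : ⟪w t, v⟫ = conj ⟪v, w t⟫ := (inner_conj_symm _ _).symm
    rw [map_add, this]
    simp only [Complex.reCLM_apply, Complex.conj_re]
    ring
  rw [h3, h4] at h2
  exact h2

lemma inner_uk_Nterm (u : (Fin d → ℤ) → EuclideanSpace ℂ (Fin d))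
    (hdiv : divFree u) (hreal : realSeq u) (h0 : u 0 = 0) (k k1 : Fin d → ℤ) :
    ⟪u k, Nterm u k k1⟫ = (-Complex.I * dotZ (u k1) k) * bilC (u (-k)) (u (k - k1)) := by
  have hbil : ∀ w : EuclideanSpace ℂ (Fin d), ⟪u k, w⟫ = bilC (u (-k)) w := by
    intro w
    simp only [PiLp.inner_apply, RCLike.inner_apply, bilC]
    exact Finset.sum_congr rfl fun j _ => by rw [← hreal k j]; ring
  rcases eq_or_ne k1 0 with rfl | h1
  · simp [Nterm, h0, dotZ_zero_left]
  · rw [Nterm, if_neg h1, inner_smul_right, inner_projP_right _ _ (hdiv k), hbil]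

lemma nonlinear_cancel {n : ℝ} (hn : 0 ≤ n) (u : (Fin d → ℤ) → EuclideanSpace ℂ (Fin d))
    (h0 : u 0 = 0) (hsupp : ∀ k, n < znorm k → u k = 0)
    (hdiv : divFree u) (hreal : realSeq u) :
    ∑ k ∈ box d n, ⟪u k, ∑' k1, Nterm u k k1⟫ = 0 := by
  classical
  have hmem : ∀ {m : Fin d → ℤ}, u m ≠ 0 → m ∈ box d n := fun {m} hm =>
    mem_box_of_znorm_le hn (not_lt.1 fun h => hm (hsupp m h))
  have htsum : ∀ k, (∑' k1, Nterm u k k1) = ∑ k1 ∈ box d n, Nterm u k k1 := by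
    intro k
    refine tsum_eq_sum fun k1 hk1 => ?_
    have hzero : u k1 = 0 := by
      by_contra h; exact hk1 (hmem h)
    rcases eq_or_ne k1 0 with rfl | h1
    · simp [Nterm]
    · simp [Nterm, if_neg h1, hzero, dotZ_zero_left]
  set F : (Fin d → ℤ) × (Fin d → ℤ) → ℂ := fun p =>
    dotZ (u p.2) p.1 * bilC (u (-p.1)) (u (p.1 - p.2)) with hF
  have hsum : ∑ k ∈ box d n, ⟪u k, ∑' k1, Nterm u k k1⟫
      = -Complex.I * ∑ p ∈ box d n ×ˢ box d n, F p := by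
    rw [Finset.mul_sum, Finset.sum_product]
    refine Finset.sum_congr rfl fun k _ => ?_
    rw [htsum, inner_sum]
    refine Finset.sum_congr rfl fun k1 _ => ?_
    rw [inner_uk_Nterm u hdiv hreal h0 k k1, hF]; ring
  have hFneg : ∀ p : (Fin d → ℤ) × (Fin d → ℤ), F (p.2 - p.1, p.2) = -F p := by
    rintro ⟨k, k1⟩
    simp only [hF]
    have e1 : dotZ (u k1) (k1 - k) = -dotZ (u k1) k := by
      rw [dotZ_sub_right, hdiv k1, zero_sub]
    have e2 : k1 - k - k1 = -k := by abel
    have e3 : -(k1 - k) = k - k1 := neg_sub k1 k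
    rw [e1, e2, e3, bilC_comm]
    ring
  have key : ∑ p ∈ box d n ×ˢ box d n, F p = 0 := by
    rw [← Finset.sum_filter_ne_zero]
    refine Finset.sum_involution (fun p _ => (p.2 - p.1, p.2)) ?_ ?_ ?_ ?_
    · intro p hp
      rw [hFneg p]; ring
    · intro p hp hFp h
      apply hFp
      have h1 : p.2 - p.1 = p.1 := congrArg Prod.fst h
      have h2 : p.2 = p.1 + p.1 := sub_eq_iff_eq_add.mp h1
      have h3 : dotZ (u p.2) (p.1 + p.1) = 0 := by rw [← h2]; exact hdiv p.2
      have hd2 : dotZ (u p.2) p.1 = 0 :=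
        add_self_eq_zero.mp (by rw [← dotZ_add_right]; exact h3)
      simp [hF, hd2]
    · intro p hp
      rw [Finset.mem_filter] at hp ⊢
      obtain ⟨hpm, hFp⟩ := hp
      rw [Finset.mem_product] at hpm
      refine ⟨Finset.mem_product.2 ⟨?_, hpm.2⟩, by rw [hFneg]; exact neg_ne_zero.2 hFp⟩
      have hu : u (p.1 - p.2) ≠ 0 := by
        intro h
        apply hFp
        simp [hF, h, bilC_zero_right]
      have h1 : p.1 - p.2 ∈ box d n := hmem hu
      have h2 := neg_mem_box h1
      simpa [neg_sub] using h2
    · intro p hp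
      have : p.2 - (p.2 - p.1) = p.1 := by abel
      simp [this]
  rw [hsum, key, mul_zero]

end NSAux

/-- Energy inequality: along any real divergence-free solution of a symmetric Galerkin
projection of the Navier–Stokes Fourier system (`d ≥ 2`),
`d/dt E(u(t)) ≤ -2ν E(u(t)) + 2 √(E(u(t))) √(E(f(t)))`. -/
theorem energy_derivative_inequality (d : ℕ) (hd : 2 ≤ d) (ν : ℝ) (hν : 0 < ν)
    (n : ℝ) (hn : 1 ≤ n)
    (f : ℝ → (Fin d → ℤ) → EuclideanSpace ℂ (Fin d))
    (hf0 : ∀ t, f t 0 = 0) (hfsupp : ∀ t k, n < znorm k → f t k = 0)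
    (hfc : ∀ k, Continuous fun t => f t k)
    (u : ℝ → (Fin d → ℤ) → EuclideanSpace ℂ (Fin d))
    (hu : IsGalerkinSol ν n f u)
    (hreal : ∀ t, realSeq (u t)) (hdiv : ∀ t, divFree (u t)) :
    ∀ t : ℝ, ∃ dE : ℝ, HasDerivAt (fun s => energy (u s)) dE t ∧
      dE ≤ -2 * ν * energy (u t)
            + 2 * Real.sqrt (energy (u t)) * Real.sqrt (energy (f t)) := by
  obtain ⟨hu0, husupp, huderiv⟩ := hu
  intro t
  classical
  set K := NSAux.box d n with hK
  have hn0 : (0:ℝ) ≤ n := by linarith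
  have hmemu : ∀ s k, u s k ≠ 0 → k ∈ K := fun s k h =>
    NSAux.mem_box_of_znorm_le hn0 (not_lt.1 fun hlt => h (husupp s k hlt))
  have huz : ∀ s k, k ∉ K → u s k = 0 := fun s k hk => by
    by_contra h; exact hk (hmemu s k h)
  have hE : ∀ s, energy (u s) = ∑ k ∈ K, ‖u s k‖^2 := by
    intro s
    exact tsum_eq_sum fun k hk => by rw [huz s k hk]; simp
  have hEf : energy (f t) = ∑ k ∈ K, ‖f t k‖^2 := by
    refine tsum_eq_sum fun k hk => ?_
    have hz : f t k = 0 := by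
      by_contra h
      exact hk (NSAux.mem_box_of_znorm_le hn0 (not_lt.1 fun hlt => h (hfsupp t k hlt)))
    rw [hz]; simp
  set g : (Fin d → ℤ) → EuclideanSpace ℂ (Fin d) := fun k =>
    if k = 0 then 0 else GalerkinRHS ν (f t k) (u t) k with hg
  have hder : ∀ k ∈ K, HasDerivAt (fun s => ‖u s k‖^2)
      (2 * (inner ℂ (g k) (u t k) : ℂ).re) t := by
    intro k _
    by_cases hk0 : k = 0
    · subst hk0
      have h1 : (fun s => ‖u s 0‖^2) = fun _ => (0:ℝ) := by
        funext s; rw [hu0 s]; simp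
      have h2 : (2 : ℝ) * (inner ℂ (g 0) (u t 0) : ℂ).re = 0 := by
        rw [hu0 t]; simp
      rw [h1, h2]; exact hasDerivAt_const t 0
    · by_cases hkn : znorm k ≤ n
      · have h := NSAux.hasDerivAt_norm_sq (huderiv t k hk0 hkn)
        simpa [hg, if_neg hk0] using h
      · have hz : ∀ s, u s k = 0 := fun s => husupp s k (not_le.1 hkn)
        have h1 : (fun s => ‖u s k‖^2) = fun _ => (0:ℝ) := by
          funext s; rw [hz s]; simp
        have h2 : (2:ℝ) * (inner ℂ (g k) (u t k) : ℂ).re = 0 := by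
          rw [hz t]; simp
        rw [h1, h2]; exact hasDerivAt_const t 0
  refine ⟨∑ k ∈ K, 2 * (inner ℂ (g k) (u t k) : ℂ).re, ?_, ?_⟩
  · have h := HasDerivAt.fun_sum hder
    have hfun : (fun s => energy (u s)) = fun s => ∑ k ∈ K, ‖u s k‖^2 := funext hE
    rw [hfun]
    exact h
  -- the bound
  have hsplit : ∀ k ∈ K, (2:ℝ) * (inner ℂ (g k) (u t k) : ℂ).re
      = 2 * (inner ℂ (u t k) (∑' k1, Nterm (u t) k k1) : ℂ).re
        - 2 * ν * ((znorm k)^2 * ‖u t k‖^2)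
        + 2 * (inner ℂ (projP k (f t k)) (u t k) : ℂ).re := by
    intro k _
    by_cases hk0 : k = 0
    · subst hk0
      rw [hu0 t, hg]
      simp
    · rw [hg]; simp only [if_neg hk0]
      rw [GalerkinRHS, inner_add_left, inner_sub_left, inner_smul_left]
      have h1 : (inner ℂ (∑' k1, Nterm (u t) k k1) (u t k) : ℂ).re
          = (inner ℂ (u t k) (∑' k1, Nterm (u t) k k1) : ℂ).re := by
        rw [← inner_conj_symm (𝕜 := ℂ) (u t k)]
        exact Complex.conj_re _
      have h2 : ((starRingEnd ℂ) ((ν * (znorm k)^2 : ℝ) : ℂ) * (inner ℂ (u t k) (u t k) : ℂ)).re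
          = ν * ((znorm k)^2 * ‖u t k‖^2) := by
        rw [Complex.conj_ofReal, Complex.re_ofReal_mul]
        have h3 : (inner ℂ (u t k) (u t k) : ℂ).re = ‖u t k‖^2 := by
          rw [← RCLike.re_to_complex]
          exact inner_self_eq_norm_sq (u t k)
        rw [h3]; ring
      rw [Complex.add_re, Complex.sub_re, h1, h2]
      ring
  rw [Finset.sum_congr rfl hsplit, Finset.sum_add_distrib, Finset.sum_sub_distrib]
  -- nonlinear term vanishes
  have hnl : ∑ k ∈ K, 2 * (inner ℂ (u t k) (∑' k1, Nterm (u t) k k1) : ℂ).re = 0 := by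
    rw [← Finset.mul_sum, ← Complex.re_sum]
    rw [NSAux.nonlinear_cancel hn0 (u t) (hu0 t) (husupp t) (hdiv t) (hreal t)]
    simp
  -- viscous term
  have hvisc : ∑ k ∈ K, 2 * ν * ((znorm k)^2 * ‖u t k‖^2) ≥ 2 * ν * energy (u t) := by
    rw [hE t, Finset.mul_sum]
    refine Finset.sum_le_sum fun k _ => ?_
    by_cases hz : u t k = 0
    · rw [hz]; simp
    · have hk0 : k ≠ 0 := fun h => hz (by rw [h]; exact hu0 t)
      have h1 : 1 ≤ (znorm k)^2 := NSAux.one_le_znorm_sq hk0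
      nlinarith [mul_nonneg (mul_nonneg (by linarith : (0:ℝ) ≤ 2*ν) (sq_nonneg ‖u t k‖))
        (by linarith : (0:ℝ) ≤ (znorm k)^2 - 1)]
  -- forcing term
  have hforce : ∑ k ∈ K, 2 * (inner ℂ (projP k (f t k)) (u t k) : ℂ).re
      ≤ 2 * Real.sqrt (energy (u t)) * Real.sqrt (energy (f t)) := by
    have hterm : ∀ k ∈ K, 2 * (inner ℂ (projP k (f t k)) (u t k) : ℂ).re
        ≤ 2 * (‖f t k‖ * ‖u t k‖) := by
      intro k _
      have h1 : (inner ℂ (projP k (f t k)) (u t k) : ℂ).re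
          ≤ ‖projP k (f t k)‖ * ‖u t k‖ := by
        rw [← RCLike.re_to_complex]
        exact re_inner_le_norm _ _
      have h2 : ‖projP k (f t k)‖ * ‖u t k‖ ≤ ‖f t k‖ * ‖u t k‖ :=
        mul_le_mul_of_nonneg_right (NSAux.norm_projP_le k (f t k)) (norm_nonneg _)
      linarith
    calc ∑ k ∈ K, 2 * (inner ℂ (projP k (f t k)) (u t k) : ℂ).re
        ≤ ∑ k ∈ K, 2 * (‖f t k‖ * ‖u t k‖) := Finset.sum_le_sum hterm
      _ = 2 * ∑ k ∈ K, ‖f t k‖ * ‖u t k‖ := by rw [Finset.mul_sum]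
      _ ≤ 2 * (Real.sqrt (∑ k ∈ K, ‖f t k‖^2) * Real.sqrt (∑ k ∈ K, ‖u t k‖^2)) := by
          have := Real.sum_mul_le_sqrt_mul_sqrt K (fun k => ‖f t k‖) (fun k => ‖u t k‖)
          linarith
      _ = 2 * Real.sqrt (energy (u t)) * Real.sqrt (energy (f t)) := by
          rw [← hE t, ← hEf]; ring
  rw [hnl]
  linarith
end
end

section
/- Let d = 3, ν > 0 and s > 3. There exists a constant C₂ > 0 depending only on s such that: (i) |N_k(u)| ≤ C₂ C² / |k|^{s−1} for every C > 0, every divergence-free u ∈ Z(C,s) and every k ≠ 0; and (ii) for every C with 0 < C < ν/C₂ and every n ≥ 1, the set of real divergence-free sequences in Z(C,s) is forward invariant for the symmetric Galerkin projection of order n of the unforced (f ≡ 0) Navier–Stokes Fourier system: every real divergence-free solution starting in Z(C,s) remains in Z(C,s) for all forward time. -/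
noncomputable section

open scoped BigOperators

namespace NSaux

open Finset Filter Set

variable {d : ℕ}

def kC {d : ℕ} (k : Fin d → ℤ) : EuclideanSpace ℂ (Fin d) := WithLp.toLp 2 (fun i => ((k i : ℤ) : ℂ))

lemma znorm_nonneg (k : Fin d → ℤ) : 0 ≤ znorm k := Real.sqrt_nonneg _

lemma znorm_sq (k : Fin d → ℤ) : znorm k ^ 2 = ∑ i, ((k i : ℝ))^2 :=
  Real.sq_sqrt (Finset.sum_nonneg fun i _ => sq_nonneg _)

lemma norm_kC (k : Fin d → ℤ) : ‖kC k‖ = znorm k := by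
  rw [EuclideanSpace.norm_eq, znorm]
  congr 1
  refine Finset.sum_congr rfl fun i _ => ?_
  simp [kC, sq_abs]

lemma one_le_znorm {k : Fin d → ℤ} (hk : k ≠ 0) : 1 ≤ znorm k := by
  obtain ⟨i, hi⟩ := Function.ne_iff.1 hk
  have h1 : (1:ℝ) ≤ ((k i : ℝ))^2 := by
    have : (1:ℤ) ≤ (k i)^2 := by
      have h := Int.one_le_abs (by simpa using hi)
      calc (1:ℤ) = 1 * 1 := by ring
        _ ≤ |k i| * |k i| := mul_le_mul h h (by norm_num) (abs_nonneg _)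
        _ = (k i)^2 := by rw [abs_mul_abs_self]; ring
    exact_mod_cast this
  have h2 : (1:ℝ) ≤ ∑ j, ((k j : ℝ))^2 :=
    h1.trans (Finset.single_le_sum (fun j _ => sq_nonneg ((k j : ℝ))) (Finset.mem_univ i))
  calc (1:ℝ) = Real.sqrt 1 := Real.sqrt_one.symm
    _ ≤ znorm k := Real.sqrt_le_sqrt h2

lemma znorm_pos {k : Fin d → ℤ} (hk : k ≠ 0) : 0 < znorm k :=
  lt_of_lt_of_le one_pos (one_le_znorm hk)

lemma abs_coord_le (k : Fin d → ℤ) (i : Fin d) : |(k i : ℝ)| ≤ znorm k := by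
  rw [← Real.sqrt_sq_eq_abs]
  exact Real.sqrt_le_sqrt (Finset.single_le_sum (fun j _ => sq_nonneg ((k j : ℝ))) (Finset.mem_univ i))

lemma znorm_triangle (k k1 : Fin d → ℤ) : znorm k ≤ znorm k1 + znorm (k - k1) := by
  have h : kC k = kC k1 + kC (k - k1) := by
    ext i
    show ((k i : ℤ) : ℂ) = ((k1 i : ℤ) : ℂ) + (((k - k1) i : ℤ) : ℂ)
    have : (k - k1) i = k i - k1 i := rfl
    rw [this]; push_cast; ring
  calc znorm k = ‖kC k‖ := (norm_kC k).symm
    _ = ‖kC k1 + kC (k - k1)‖ := by rw [h]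
    _ ≤ ‖kC k1‖ + ‖kC (k - k1)‖ := norm_add_le _ _
    _ = znorm k1 + znorm (k - k1) := by rw [norm_kC, norm_kC]

lemma dotZ_eq_inner (v : EuclideanSpace ℂ (Fin d)) (k : Fin d → ℤ) :
    dotZ v k = inner ℂ (kC k) v := by
  rw [dotZ, PiLp.inner_apply]
  refine Finset.sum_congr rfl fun i _ => ?_
  simp [kC, RCLike.inner_apply, mul_comm]

lemma norm_dotZ_le (v : EuclideanSpace ℂ (Fin d)) (k : Fin d → ℤ) :
    ‖dotZ v k‖ ≤ znorm k * ‖v‖ := by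
  rw [dotZ_eq_inner, ← norm_kC]
  exact norm_inner_le_norm _ _

lemma projP_eq (k : Fin d → ℤ) (v : EuclideanSpace ℂ (Fin d)) :
    projP k v = v - ((dotZ v k / ((znorm k ^ 2 : ℝ) : ℂ))) • kC k := by
  ext j
  simp only [projP, PiLp.sub_apply, PiLp.smul_apply, smul_eq_mul, znorm_sq, kC]

lemma inner_kC_self (k : Fin d → ℤ) : (inner ℂ (kC k) (kC k) : ℂ) = ((znorm k ^ 2 : ℝ) : ℂ) := by
  rw [← norm_kC, inner_self_eq_norm_sq_to_K]
  norm_cast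

lemma inner_kC_projP {k : Fin d → ℤ} (hk : k ≠ 0) (v : EuclideanSpace ℂ (Fin d)) :
    (inner ℂ (kC k) (projP k v) : ℂ) = 0 := by
  rw [projP_eq, inner_sub_right, inner_smul_right, inner_kC_self, ← dotZ_eq_inner]
  have h : ((znorm k : ℝ) : ℂ) ≠ 0 := by
    exact_mod_cast (znorm_pos hk).ne'
  field_simp
  ring

lemma norm_projP_le {k : Fin d → ℤ} (hk : k ≠ 0) (v : EuclideanSpace ℂ (Fin d)) :
    ‖projP k v‖ ≤ ‖v‖ := by
  set c : ℂ := dotZ v k / ((znorm k ^ 2 : ℝ) : ℂ)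
  have hv : v = projP k v + c • kC k := by
    rw [projP_eq]; abel
  have h0 : (inner ℂ (projP k v) (c • kC k) : ℂ) = 0 := by
    have h2 : (inner ℂ (projP k v) (kC k) : ℂ) = 0 := by
      have h3 := congrArg (starRingEnd ℂ) (inner_kC_projP hk v)
      have h4 : starRingEnd ℂ (inner ℂ (kC k) (projP k v) : ℂ) = (inner ℂ (projP k v) (kC k) : ℂ) :=
        inner_conj_symm _ _
      rw [h4] at h3
      simpa using h3
    have h5 : (inner ℂ (projP k v) (c • kC k) : ℂ) = c * inner ℂ (projP k v) (kC k) :=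
      inner_smul_right _ _ _
    rw [h5, h2, mul_zero]
  have h1 : ‖v‖ ^ 2 = ‖projP k v‖ ^ 2 + 2 * RCLike.re (inner ℂ (projP k v) (c • kC k) : ℂ) + ‖c • kC k‖ ^ 2 := by
    conv_lhs => rw [hv]
    exact norm_add_sq (𝕜 := ℂ) _ _
  rw [h0] at h1
  simp only [map_zero, mul_zero, add_zero] at h1
  nlinarith [norm_nonneg (projP k v), norm_nonneg v, sq_nonneg ‖c • kC k‖]

lemma projP_zero (k : Fin d → ℤ) : projP k (0 : EuclideanSpace ℂ (Fin d)) = 0 := by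
  ext j
  show (0:ℂ) - (dotZ 0 k / _) * _ = 0
  simp [dotZ]

lemma norm_Nterm_le {k : Fin d → ℤ} (hk : k ≠ 0)
    (u : (Fin d → ℤ) → EuclideanSpace ℂ (Fin d)) (k1 : Fin d → ℤ) :
    ‖Nterm u k k1‖ ≤ znorm k * (‖u k1‖ * ‖u (k - k1)‖) := by
  by_cases h : k1 = 0
  · simp only [Nterm, if_pos h, norm_zero]
    exact mul_nonneg (znorm_nonneg k) (mul_nonneg (norm_nonneg _) (norm_nonneg _))
  · rw [Nterm, if_neg h, norm_smul]
    have h1 : ‖-Complex.I * dotZ (u k1) k‖ = ‖dotZ (u k1) k‖ := by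
      rw [norm_mul, norm_neg, Complex.norm_I, one_mul]
    rw [h1]
    calc ‖dotZ (u k1) k‖ * ‖projP k (u (k - k1))‖
        ≤ (znorm k * ‖u k1‖) * ‖u (k - k1)‖ :=
          mul_le_mul (norm_dotZ_le _ _) (norm_projP_le hk _) (norm_nonneg _)
            (mul_nonneg (znorm_nonneg k) (norm_nonneg _))
      _ = znorm k * (‖u k1‖ * ‖u (k - k1)‖) := by ring


/-! ### Summability over `ℤ³` -/

def hfun (p : ℝ) (m : ℤ) : ℝ := 1 / (1 + |(m:ℝ)|) ^ p

lemma hfun_nonneg (p : ℝ) (m : ℤ) : 0 ≤ hfun p m := by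
  unfold hfun; positivity

lemma summable_hfun {p : ℝ} (hp : 1 < p) : Summable (hfun p) := by
  have base := (Real.summable_one_div_nat_add_rpow 1 p).2 hp
  apply Summable.of_nat_of_neg
  · refine base.congr fun n => ?_
    unfold hfun
    push_cast
    rw [abs_of_nonneg (by positivity : (0:ℝ) ≤ (n:ℝ) + 1),
      abs_of_nonneg (by positivity : (0:ℝ) ≤ (n:ℝ))]
    ring_nf
  · refine base.congr fun n => ?_
    unfold hfun
    push_cast
    rw [abs_neg, abs_of_nonneg (by positivity : (0:ℝ) ≤ (n:ℝ) + 1),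
      abs_of_nonneg (by positivity : (0:ℝ) ≤ (n:ℝ))]
    ring_nf

def cubeEquiv : (Fin 3 → ℤ) ≃ ℤ × ℤ × ℤ where
  toFun k := (k 0, k 1, k 2)
  invFun p := ![p.1, p.2.1, p.2.2]
  left_inv k := by
    funext i
    fin_cases i <;> rfl
  right_inv p := rfl

lemma summable_cube {p : ℝ} (hp : 1 < p) :
    Summable (fun k : Fin 3 → ℤ => hfun p (k 0) * (hfun p (k 1) * hfun p (k 2))) := by
  have hs := summable_hfun hp
  have h2 : Summable (fun x : ℤ × ℤ => hfun p x.1 * hfun p x.2) :=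
    hs.mul_of_nonneg hs (fun m => hfun_nonneg p m) (fun m => hfun_nonneg p m)
  have h3 : Summable (fun x : ℤ × ℤ × ℤ => hfun p x.1 * (hfun p x.2.1 * hfun p x.2.2)) :=
    hs.mul_of_nonneg h2 (fun m => hfun_nonneg p m)
      (fun m => mul_nonneg (hfun_nonneg p _) (hfun_nonneg p _))
  have h4 := (Equiv.summable_iff (e := cubeEquiv)
    (f := fun x : ℤ × ℤ × ℤ => hfun p x.1 * (hfun p x.2.1 * hfun p x.2.2))).2 h3
  exact h4.congr fun k => rfl

/-- the basic decaying sequence on `ℤ³`. -/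
def zb (s : ℝ) (k : Fin 3 → ℤ) : ℝ := if k = 0 then 0 else 1 / znorm k ^ s

lemma zb_nonneg (s : ℝ) (k : Fin 3 → ℤ) : 0 ≤ zb s k := by
  unfold zb
  split
  · exact le_refl 0
  · exact div_nonneg zero_le_one (Real.rpow_nonneg (znorm_nonneg k) s)

lemma one_add_abs_le (k : Fin 3 → ℤ) (hk : k ≠ 0) (i : Fin 3) :
    1 + |(k i : ℝ)| ≤ 2 * znorm k := by
  have h1 := one_le_znorm hk
  have h2 := abs_coord_le k i
  linarith

lemma zb_le_cube {s : ℝ} (hs : 0 < s) (k : Fin 3 → ℤ) :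
    zb s k ≤ (8:ℝ) ^ (s/3) * (hfun (s/3) (k 0) * (hfun (s/3) (k 1) * hfun (s/3) (k 2))) := by
  by_cases hk : k = 0
  · rw [zb, if_pos hk]
    have : (0:ℝ) ≤ (8:ℝ) ^ (s/3) * (hfun (s/3) (k 0) * (hfun (s/3) (k 1) * hfun (s/3) (k 2))) := by
      have := hfun_nonneg (s/3) (k 0); have := hfun_nonneg (s/3) (k 1); have := hfun_nonneg (s/3) (k 2)
      positivity
    exact this
  · rw [zb, if_neg hk]
    have hz := znorm_pos hk
    have hzs : (0:ℝ) < znorm k ^ s := Real.rpow_pos_of_pos hz s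
    set q := s/3 with hq
    have hq0 : 0 < q := by positivity
    have hfac : ∀ i : Fin 3, (0:ℝ) < (1 + |(k i : ℝ)|) ^ q := fun i => by positivity
    -- each factor ≤ (2 znorm k)^q
    have hle : ∀ i : Fin 3, (1 + |(k i : ℝ)|) ^ q ≤ (2 * znorm k) ^ q := fun i =>
      Real.rpow_le_rpow (by positivity) (one_add_abs_le k hk i) hq0.le
    have hP : (1 + |(k 0 : ℝ)|) ^ q * ((1 + |(k 1 : ℝ)|) ^ q * (1 + |(k 2 : ℝ)|) ^ q)
        ≤ (8:ℝ) ^ q * znorm k ^ s := by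
      have h8 : (2 * znorm k) ^ q * ((2 * znorm k) ^ q * (2 * znorm k) ^ q)
          = (8:ℝ) ^ q * znorm k ^ s := by
        rw [← Real.rpow_add (by positivity), ← Real.rpow_add (by positivity)]
        have h2z : (0:ℝ) ≤ 2 * znorm k := by positivity
        have : (2 * znorm k) ^ (q + (q + q)) = (2:ℝ) ^ (q+(q+q)) * znorm k ^ (q+(q+q)) :=
          Real.mul_rpow (by norm_num) hz.le
        rw [this]
        have hqs : q + (q + q) = s := by rw [hq]; ring
        rw [hqs]
        congr 1
        have : (8:ℝ) = (2:ℝ) ^ (3:ℝ) := by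
          rw [show ((3:ℝ)) = ((3:ℕ):ℝ) by norm_num, Real.rpow_natCast]; norm_num
        rw [this, ← Real.rpow_mul (by norm_num)]
        congr 1
        rw [hq]; ring
      calc (1 + |(k 0 : ℝ)|) ^ q * ((1 + |(k 1 : ℝ)|) ^ q * (1 + |(k 2 : ℝ)|) ^ q)
          ≤ (2 * znorm k) ^ q * ((2 * znorm k) ^ q * (2 * znorm k) ^ q) := by
            apply mul_le_mul (hle 0) _ (by positivity) (by positivity)
            apply mul_le_mul (hle 1) (hle 2) (hfac 2).le (by positivity)
        _ = (8:ℝ) ^ q * znorm k ^ s := h8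
    unfold hfun
    rw [div_mul_div_comm, div_mul_div_comm, one_mul, one_mul, mul_one_div]
    rw [div_le_div_iff₀ hzs (by positivity)]
    calc 1 * ((1 + |(k 0 : ℝ)|) ^ q * ((1 + |(k 1 : ℝ)|) ^ q * (1 + |(k 2 : ℝ)|) ^ q))
        = (1 + |(k 0 : ℝ)|) ^ q * ((1 + |(k 1 : ℝ)|) ^ q * (1 + |(k 2 : ℝ)|) ^ q) := one_mul _
      _ ≤ (8:ℝ) ^ q * znorm k ^ s := hP

lemma summable_zb {s : ℝ} (hs : 3 < s) : Summable (zb s) := by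
  have h1 : (1:ℝ) < s / 3 := by linarith
  exact Summable.of_nonneg_of_le (zb_nonneg s) (zb_le_cube (by linarith))
    ((summable_cube h1).mul_left _)

/-- The constant `S = ∑ 1/|k|^s`. -/
def Sc (s : ℝ) : ℝ := ∑' k, zb s k

def e1 : Fin 3 → ℤ := ![1, 0, 0]

lemma e1_ne : e1 ≠ 0 := by
  intro h
  have := congrFun h 0
  simp [e1] at this

lemma znorm_e1 : znorm e1 = 1 := by
  rw [znorm]
  rw [Fin.sum_univ_three]
  norm_num [e1]
  rfl

lemma one_le_Sc {s : ℝ} (hs : 3 < s) : 1 ≤ Sc s := by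
  have h : zb s e1 = 1 := by
    rw [zb, if_neg e1_ne, znorm_e1, Real.one_rpow]
    norm_num
  calc (1:ℝ) = zb s e1 := h.symm
    _ ≤ Sc s := Summable.le_tsum (summable_zb hs) e1 (fun j _ => zb_nonneg s j)


/-! ### The convolution estimate -/

lemma half_bound {s : ℝ} (hs : 0 < s) {k j : Fin 3 → ℤ} (hk : k ≠ 0) (hj : j ≠ 0)
    (h : znorm k / 2 ≤ znorm j) :
    1 / znorm j ^ s ≤ 2 ^ s / znorm k ^ s := by
  have hkp := znorm_pos hk
  have hjp := znorm_pos hj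
  have hks : (0:ℝ) < znorm k ^ s := Real.rpow_pos_of_pos hkp s
  have hjs : (0:ℝ) < znorm j ^ s := Real.rpow_pos_of_pos hjp s
  have h2s : (0:ℝ) < (2:ℝ) ^ s := Real.rpow_pos_of_pos two_pos s
  have h1 : (znorm k / 2) ^ s ≤ znorm j ^ s := Real.rpow_le_rpow (by positivity) h hs.le
  rw [Real.div_rpow (znorm_nonneg k) (by norm_num : (0:ℝ) ≤ 2)] at h1
  rw [div_le_div_iff₀ hjs hks]
  have h2 : znorm k ^ s ≤ znorm j ^ s * 2 ^ s := by
    rw [div_le_iff₀ h2s] at h1; linarith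
  rw [one_mul, mul_comm ((2:ℝ) ^ s)]
  exact h2

lemma Nfun_bound {s : ℝ} (hs : 3 < s) {C : ℝ} (hC : 0 < C)
    (u : (Fin 3 → ℤ) → EuclideanSpace ℂ (Fin 3)) (hu0 : u 0 = 0)
    (hu : ∀ k : Fin 3 → ℤ, k ≠ 0 → ‖u k‖ ≤ C / znorm k ^ s)
    {k : Fin 3 → ℤ} (hk : k ≠ 0) :
    ‖Nfun u k‖ ≤ (2 ^ (s+1) * Sc s) * C ^ 2 / znorm k ^ (s-1) := by
  have hs0 : (0:ℝ) < s := by linarith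
  have hkp := znorm_pos hk
  have hks : (0:ℝ) < znorm k ^ s := Real.rpow_pos_of_pos hkp s
  have h2s : (0:ℝ) < (2:ℝ) ^ s := Real.rpow_pos_of_pos two_pos s
  set b : (Fin 3 → ℤ) → ℝ := fun j => C * zb s j with hb
  have hbnn : ∀ j, 0 ≤ b j := fun j => mul_nonneg hC.le (zb_nonneg s j)
  have hub : ∀ j, ‖u j‖ ≤ b j := by
    intro j
    by_cases hj : j = 0
    · rw [hj, hu0, norm_zero]; exact hbnn 0
    · have h := hu j hj
      simp only [hb, zb, if_neg hj, mul_one_div]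
      exact h
  have hcoef : (0:ℝ) ≤ 2 ^ s * C / znorm k ^ s := by positivity
  have key : ∀ k1, b k1 * b (k - k1) ≤ (2 ^ s * C / znorm k ^ s) * (b k1 + b (k - k1)) := by
    intro k1
    by_cases h1 : k1 = 0
    · have hb0 : b k1 = 0 := by simp [hb, zb, h1]
      rw [hb0, zero_mul]
      exact mul_nonneg hcoef (add_nonneg le_rfl (hbnn _))
    by_cases h2 : k - k1 = 0
    · have hb0 : b (k - k1) = 0 := by simp [hb, zb, h2]
      rw [hb0, mul_zero]
      exact mul_nonneg hcoef (add_nonneg (hbnn _) le_rfl)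
    have htri := znorm_triangle k k1
    rcases le_total (znorm k1) (znorm (k - k1)) with hle | hle
    · have hhalf : znorm k / 2 ≤ znorm (k - k1) := by linarith
      have hbb : b (k - k1) ≤ 2 ^ s * C / znorm k ^ s := by
        have hhb := half_bound hs0 hk h2 hhalf
        simp only [hb, zb, if_neg h2, mul_one_div]
        calc C / znorm (k - k1) ^ s = C * (1 / znorm (k - k1) ^ s) := by ring
          _ ≤ C * (2 ^ s / znorm k ^ s) := mul_le_mul_of_nonneg_left hhb hC.le
          _ = 2 ^ s * C / znorm k ^ s := by ring
      calc b k1 * b (k - k1) ≤ b k1 * (2 ^ s * C / znorm k ^ s) :=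
            mul_le_mul_of_nonneg_left hbb (hbnn k1)
        _ = (2 ^ s * C / znorm k ^ s) * b k1 := by ring
        _ ≤ (2 ^ s * C / znorm k ^ s) * (b k1 + b (k - k1)) :=
            mul_le_mul_of_nonneg_left (le_add_of_nonneg_right (hbnn _)) hcoef
    · have hhalf : znorm k / 2 ≤ znorm k1 := by linarith
      have hbb : b k1 ≤ 2 ^ s * C / znorm k ^ s := by
        have hhb := half_bound hs0 hk h1 hhalf
        simp only [hb, zb, if_neg h1, mul_one_div]
        calc C / znorm k1 ^ s = C * (1 / znorm k1 ^ s) := by ring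
          _ ≤ C * (2 ^ s / znorm k ^ s) := mul_le_mul_of_nonneg_left hhb hC.le
          _ = 2 ^ s * C / znorm k ^ s := by ring
      calc b k1 * b (k - k1) ≤ (2 ^ s * C / znorm k ^ s) * b (k - k1) :=
            mul_le_mul_of_nonneg_right hbb (hbnn _)
        _ ≤ (2 ^ s * C / znorm k ^ s) * (b k1 + b (k - k1)) :=
            mul_le_mul_of_nonneg_left (le_add_of_nonneg_left (hbnn _)) hcoef
  have hsub : Summable (fun k1 : Fin 3 → ℤ => zb s (k - k1)) := by
    have h := (Equiv.summable_iff (e := Equiv.subLeft k) (f := zb s)).2 (summable_zb hs)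
    exact h.congr fun k1 => rfl
  have htsub : ∑' k1 : Fin 3 → ℤ, zb s (k - k1) = Sc s := by
    have h := Equiv.tsum_eq (Equiv.subLeft k) (zb s)
    exact h
  have hsum1 : Summable (fun k1 : Fin 3 → ℤ => b k1 + b (k - k1)) := by
    have h1 : Summable (fun k1 : Fin 3 → ℤ => C * zb s k1) := (summable_zb hs).mul_left C
    have h2 : Summable (fun k1 : Fin 3 → ℤ => C * zb s (k - k1)) := hsub.mul_left C
    exact h1.add h2
  set M : (Fin 3 → ℤ) → ℝ := fun k1 => znorm k * ((2 ^ s * C / znorm k ^ s) * (b k1 + b (k - k1))) with hM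
  have hsumM : Summable M := (hsum1.mul_left _).mul_left _
  have hterm : ∀ k1, ‖Nterm u k k1‖ ≤ M k1 := by
    intro k1
    refine (norm_Nterm_le hk u k1).trans ?_
    refine mul_le_mul_of_nonneg_left ?_ (znorm_nonneg k)
    exact (mul_le_mul (hub k1) (hub _) (norm_nonneg _) (hbnn k1)).trans (key k1)
  have hsumnorm : Summable (fun k1 => ‖Nterm u k k1‖) :=
    Summable.of_nonneg_of_le (fun k1 => norm_nonneg _) hterm hsumM
  have hle1 : ‖Nfun u k‖ ≤ ∑' k1, ‖Nterm u k k1‖ := norm_tsum_le_tsum_norm hsumnorm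
  have hle2 : ∑' k1, ‖Nterm u k k1‖ ≤ ∑' k1, M k1 := Summable.tsum_le_tsum hterm hsumnorm hsumM
  have hMt : ∑' k1, M k1 = (2 ^ (s+1) * Sc s) * C ^ 2 / znorm k ^ (s-1) := by
    simp only [hM, hb]
    rw [tsum_mul_left, tsum_mul_left,
      Summable.tsum_add ((summable_zb hs).mul_left C) (hsub.mul_left C),
      tsum_mul_left, tsum_mul_left, htsub]
    have hzs1 : znorm k ^ (s-1) = znorm k ^ s / znorm k := by
      rw [Real.rpow_sub hkp, Real.rpow_one]
    have h2s1 : (2:ℝ) ^ (s+1) = 2 ^ s * 2 := by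
      rw [Real.rpow_add two_pos, Real.rpow_one]
    rw [hzs1, h2s1]
    rw [Sc]
    field_simp
    ring
  exact (hle1.trans hle2).trans_eq hMt

end NSaux

namespace NSaux

open Filter Set

lemma sq_le_iff' {a X C : ℝ} (ha : 0 < a) (hX : 0 ≤ X) (hC : 0 ≤ C) :
    a ^ 2 * X ^ 2 ≤ C ^ 2 ↔ X ≤ C / a := by
  rw [le_div_iff₀ ha]
  constructor
  · intro h; nlinarith [add_nonneg (mul_nonneg hX ha.le) hC]
  · intro h; nlinarith [add_nonneg (mul_nonneg hX ha.le) hC]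

set_option maxHeartbeats 2000000 in
lemma invariance {ν s C₂ : ℝ} (hν : 0 < ν) (hs : 3 < s) (hC₂ : 0 < C₂)
    (hN : ∀ C : ℝ, 0 < C → ∀ u : (Fin 3 → ℤ) → EuclideanSpace ℂ (Fin 3), u 0 = 0 →
      (∀ k : Fin 3 → ℤ, k ≠ 0 → ‖u k‖ ≤ C / znorm k ^ s) →
      ∀ k : Fin 3 → ℤ, k ≠ 0 → ‖Nfun u k‖ ≤ C₂ * C ^ 2 / znorm k ^ (s - 1))
    (C : ℝ) (hC : 0 < C) (hCν : C < ν / C₂) (n : ℝ) (hn : 1 ≤ n)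
    (u : ℝ → (Fin 3 → ℤ) → EuclideanSpace ℂ (Fin 3))
    (hsol : IsGalerkinSol ν n (fun _ _ => 0) u)
    (t₀ : ℝ) (hinit : ∀ k : Fin 3 → ℤ, k ≠ 0 → ‖u t₀ k‖ ≤ C / znorm k ^ s)
    (t : ℝ) (ht : t₀ ≤ t) (k : Fin 3 → ℤ) (hk : k ≠ 0) :
    ‖u t k‖ ≤ C / znorm k ^ s := by
  obtain ⟨h0, hhigh, hode⟩ := hsol
  have hCC : C₂ * C < ν := by rwa [← lt_div_iff₀' hC₂]
  by_cases hkn : n < znorm k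
  · rw [hhigh t k hkn, norm_zero]
    exact div_nonneg hC.le (Real.rpow_nonneg (znorm_nonneg k) s)
  push_neg at hkn
  classical
  have hkp := znorm_pos hk
  set K : Finset (Fin 3 → ℤ) :=
    (Fintype.piFinset (fun _ : Fin 3 => Finset.Icc (-⌈n⌉) ⌈n⌉)).filter
      (fun j => j ≠ 0 ∧ znorm j ≤ n) with hKdef
  have memK : ∀ j : Fin 3 → ℤ, j ≠ 0 → znorm j ≤ n → j ∈ K := by
    intro j hj hjn
    refine Finset.mem_filter.2 ⟨Fintype.mem_piFinset.2 fun i => ?_, hj, hjn⟩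
    rw [Finset.mem_Icc, ← abs_le]
    have h1 : |(j i : ℝ)| ≤ (⌈n⌉ : ℝ) := (abs_coord_le j i).trans (hjn.trans (Int.le_ceil n))
    exact_mod_cast (by push_cast; exact h1 : ((|j i| : ℤ) : ℝ) ≤ ((⌈n⌉ : ℤ) : ℝ))
  have hKmem : ∀ j ∈ K, j ≠ 0 ∧ znorm j ≤ n := fun j hj => (Finset.mem_filter.1 hj).2
  have hKne : K.Nonempty := ⟨e1, memK e1 e1_ne (by rw [znorm_e1]; exact hn)⟩
  have hkK : k ∈ K := memK k hk hkn
  set w : (Fin 3 → ℤ) → ℝ := fun j => (znorm j ^ s) ^ 2 with hw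
  have hwpos : ∀ j, j ≠ 0 → 0 < w j := fun j hj =>
    pow_pos (Real.rpow_pos_of_pos (znorm_pos hj) s) 2
  set G : (Fin 3 → ℤ) → ℝ → ℝ := fun j x => w j * ‖u x j‖ ^ 2 with hG
  set R : (Fin 3 → ℤ) → ℝ → EuclideanSpace ℂ (Fin 3) := fun j x => GalerkinRHS ν 0 (u x) j with hR
  set D : (Fin 3 → ℤ) → ℝ → ℝ := fun j x =>
    w j * Complex.re ((inner ℂ (u x j) (R j x) : ℂ) + inner ℂ (R j x) (u x j)) with hD
  have hder : ∀ j ∈ K, ∀ x : ℝ, HasDerivAt (fun tt => G j tt) (D j x) x := by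
    intro j hj x
    have h1 : HasDerivAt (fun tt => u tt j) (R j x) x := hode x j (hKmem j hj).1 (hKmem j hj).2
    have h2 : HasDerivAt (fun tt => Complex.re (inner ℂ (u tt j) (u tt j) : ℂ))
        (Complex.re ((inner ℂ (u x j) (R j x) : ℂ) + inner ℂ (R j x) (u x j))) x :=
      Complex.reCLM.hasFDerivAt.comp_hasDerivAt x (h1.inner ℂ h1)
    have h3 : (fun tt => w j * Complex.re (inner ℂ (u tt j) (u tt j) : ℂ)) = fun tt => G j tt := by
      funext tt
      rw [hG]
      congr 1
      exact inner_self_eq_norm_sq (𝕜 := ℂ) (u tt j)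
    have h4 := h2.const_mul (w j)
    rwa [h3] at h4
  have hcont : ∀ j ∈ K, Continuous (fun x => G j x) := fun j hj =>
    continuous_iff_continuousAt.2 fun x => (hder j hj x).continuousAt
  set F : ℝ → ℝ := fun x => K.sup' hKne (fun j => G j x) with hF
  have hFcont : Continuous F := Continuous.finset_sup'_apply hKne fun j hj => hcont j hj
  set A : ℝ → Finset (Fin 3 → ℤ) := fun x => K.filter (fun j => G j x = F x) with hA
  have hAne : ∀ x, (A x).Nonempty := by
    intro x
    obtain ⟨j, hjK, hj⟩ := Finset.exists_mem_eq_sup' hKne (fun j => G j x)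
    exact ⟨j, Finset.mem_filter.2 ⟨hjK, hj.symm⟩⟩
  set f' : ℝ → ℝ := fun x => (A x).sup' (hAne x) (fun j => D j x) with hf'
  have hAsub : ∀ x : ℝ, ∀ j ∈ A x, j ∈ K := fun x j hj => (Finset.mem_filter.1 hj).1
  -- the right-slope estimate
  have hslope : ∀ x : ℝ, ∀ r : ℝ, f' x < r →
      ∀ᶠ z in nhdsWithin x (Set.Ioi x), slope F x z < r := by
    intro x r hr
    have hev : ∀ j ∈ K, ∀ᶠ z in nhdsWithin x (Set.Ioi x), (G j z - F x) / (z - x) < r := by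
      intro j hj
      have hsl : Filter.Tendsto (slope (fun tt => G j tt) x) (nhdsWithin x (Set.Ioi x))
          (nhds (D j x)) := by
        have h1 := hasDerivAt_iff_tendsto_slope.1 (hder j hj x)
        exact h1.mono_left (nhdsWithin_mono x (fun z hz => ne_of_gt hz))
      by_cases hjA : j ∈ A x
      · have hGx : G j x = F x := (Finset.mem_filter.1 hjA).2
        have hDj : D j x < r := lt_of_le_of_lt (Finset.le_sup' (fun j => D j x) hjA) hr
        filter_upwards [hsl.eventually_lt_const hDj] with z hz
        rw [slope_def_field] at hz
        rwa [hGx] at hz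
      · have hGlt : G j x < F x :=
          lt_of_le_of_ne (Finset.le_sup' (fun j => G j x) hj)
            (fun h => hjA (Finset.mem_filter.2 ⟨hj, h⟩))
        have hden : Filter.Tendsto (fun z : ℝ => (z - x)⁻¹) (nhdsWithin x (Set.Ioi x))
            Filter.atTop := by
          have hsub : Filter.Tendsto (fun z : ℝ => z - x) (nhdsWithin x (Set.Ioi x))
              (nhdsWithin 0 (Set.Ioi 0)) := by
            apply tendsto_nhdsWithin_of_tendsto_nhds_of_eventually_within
            · have h1 : Filter.Tendsto (fun z : ℝ => z - x) (nhds x) (nhds 0) := by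
                have := (continuous_id.sub (continuous_const (y := x))).tendsto x
                simpa [Pi.sub_def] using this
              exact h1.mono_left nhdsWithin_le_nhds
            · filter_upwards [self_mem_nhdsWithin] with z hz
              exact sub_pos.2 (Set.mem_Ioi.1 hz)
          exact tendsto_inv_nhdsGT_zero.comp hsub
        have hc : Filter.Tendsto (fun z : ℝ => (G j x - F x) * (z - x)⁻¹)
            (nhdsWithin x (Set.Ioi x)) Filter.atBot :=
          (tendsto_const_mul_atBot_of_neg (sub_neg.2 hGlt)).2 hden
        have hslope2 : Filter.Tendsto (fun z => (G j z - F x) / (z - x))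
            (nhdsWithin x (Set.Ioi x)) Filter.atBot := by
          have hadd := hsl.add_atBot hc
          refine hadd.congr' ?_
          filter_upwards [self_mem_nhdsWithin] with z hz
          have hzx : z - x ≠ 0 := sub_ne_zero.2 (ne_of_gt hz)
          rw [slope_def_field, ← div_eq_mul_inv, ← add_div]
          congr 1
          ring
        exact hslope2.eventually (Filter.eventually_lt_atBot r)
    have hall := (Filter.eventually_all_finite K.finite_toSet).2
      (fun j hj => hev j (by exact_mod_cast hj))
    filter_upwards [hall, self_mem_nhdsWithin] with z hz hzx
    obtain ⟨j, hjK, hjz⟩ := Finset.exists_mem_eq_sup' hKne (fun j => G j z)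
    rw [slope_def_field]
    have hFz : F z = G j z := hjz
    rw [hFz]
    exact hz j (Finset.mem_coe.2 hjK)
  -- the boundary estimate
  have hbound : ∀ x : ℝ, F x = C ^ 2 → f' x < 0 := by
    intro x hFx
    have hZ : ∀ j : Fin 3 → ℤ, j ≠ 0 → ‖u x j‖ ≤ C / znorm j ^ s := by
      intro j hj
      by_cases hjn : znorm j ≤ n
      · have hjK := memK j hj hjn
        have h1 : G j x ≤ C ^ 2 := hFx ▸ Finset.le_sup' (fun j => G j x) hjK
        have hzs : 0 < znorm j ^ s := Real.rpow_pos_of_pos (znorm_pos hj) s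
        have h2 : (znorm j ^ s) ^ 2 * ‖u x j‖ ^ 2 ≤ C ^ 2 := h1
        exact (sq_le_iff' hzs (norm_nonneg _) hC.le).1 h2
      · push_neg at hjn
        rw [hhigh x j hjn, norm_zero]
        exact div_nonneg hC.le (Real.rpow_nonneg (znorm_nonneg j) s)
    have hNx := hN C hC (u x) (h0 x) hZ
    rw [hf']
    rw [Finset.sup'_lt_iff]
    intro j hjA
    have hjK := hAsub x j hjA
    have hGx : G j x = F x := (Finset.mem_filter.1 hjA).2
    obtain ⟨hj0, hjn⟩ := hKmem j hjK
    have hzp := znorm_pos hj0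
    have hzs : 0 < znorm j ^ s := Real.rpow_pos_of_pos hzp s
    have hz1 : 1 ≤ znorm j := one_le_znorm hj0
    have heq : ‖u x j‖ = C / znorm j ^ s := by
      have h1 : (znorm j ^ s) ^ 2 * ‖u x j‖ ^ 2 = C ^ 2 := hGx.trans hFx
      have h2 : (znorm j ^ s * ‖u x j‖) ^ 2 = C ^ 2 := by rw [mul_pow]; exact h1
      have h3 : znorm j ^ s * ‖u x j‖ = C := by
        have h4 := congrArg Real.sqrt h2
        rwa [Real.sqrt_sq (by positivity), Real.sqrt_sq hC.le] at h4
      rw [eq_div_iff hzs.ne', mul_comm]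
      exact h3
    have hupos : 0 < ‖u x j‖ := by rw [heq]; positivity
    have hRx : R j x = Nfun (u x) j - ((ν * znorm j ^ 2 : ℝ) : ℂ) • u x j := by
      show GalerkinRHS ν 0 (u x) j = _
      rw [GalerkinRHS, projP_zero, add_zero]
      rfl
    have hre : Complex.re ((inner ℂ (u x j) (R j x) : ℂ) + inner ℂ (R j x) (u x j))
        = 2 * Complex.re (inner ℂ (u x j) (R j x) : ℂ) := by
      have hconj : (inner ℂ (R j x) (u x j) : ℂ) = starRingEnd ℂ (inner ℂ (u x j) (R j x) : ℂ) :=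
        (inner_conj_symm _ _).symm
      rw [hconj, Complex.add_re, Complex.conj_re]
      ring
    have hNub : Complex.re (inner ℂ (u x j) (Nfun (u x) j) : ℂ)
        ≤ ‖u x j‖ * (C₂ * C ^ 2 / znorm j ^ (s - 1)) := by
      have h1 : Complex.re (inner ℂ (u x j) (Nfun (u x) j) : ℂ)
          ≤ ‖u x j‖ * ‖Nfun (u x) j‖ := re_inner_le_norm (𝕜 := ℂ) (u x j) (Nfun (u x) j)
      exact h1.trans (mul_le_mul_of_nonneg_left (hNx j hj0) (norm_nonneg _))
    have hsmul : Complex.re (inner ℂ (u x j) (((ν * znorm j ^ 2 : ℝ) : ℂ) • u x j) : ℂ)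
        = ν * znorm j ^ 2 * ‖u x j‖ ^ 2 := by
      have h1 : (inner ℂ (u x j) (((ν * znorm j ^ 2 : ℝ) : ℂ) • u x j) : ℂ)
          = ((ν * znorm j ^ 2 : ℝ) : ℂ) * inner ℂ (u x j) (u x j) := inner_smul_right _ _ _
      rw [h1, Complex.re_ofReal_mul]
      congr 1
      exact inner_self_eq_norm_sq (𝕜 := ℂ) (u x j)
    have hzs1' : (0:ℝ) < znorm j ^ (s - 1) := Real.rpow_pos_of_pos hzp _
    have hzs1 : znorm j ^ s = znorm j ^ (s - 1) * znorm j := by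
      have h5 := Real.rpow_add hzp (s - 1) 1
      rw [Real.rpow_one] at h5
      rw [show s - 1 + 1 = s by ring] at h5
      exact h5
    have hkey : ‖u x j‖ * (C₂ * C ^ 2 / znorm j ^ (s - 1)) < ν * znorm j ^ 2 * ‖u x j‖ ^ 2 := by
      rw [heq, hzs1]
      have hfinal : C₂ * C < ν * znorm j := by nlinarith
      have hLHS : C / (znorm j ^ (s-1) * znorm j) * (C₂ * C ^ 2 / znorm j ^ (s-1))
          = (C₂ * C ^ 3) / ((znorm j ^ (s-1)) ^ 2 * znorm j) := by
        field_simp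
      have hRHS : ν * znorm j ^ 2 * (C / (znorm j ^ (s-1) * znorm j)) ^ 2
          = (ν * C ^ 2) / (znorm j ^ (s-1)) ^ 2 := by
        field_simp
      rw [hLHS, hRHS]
      rw [div_lt_div_iff₀ (by positivity) (by positivity)]
      have hmul := mul_lt_mul_of_pos_left hfinal
        (show (0:ℝ) < (znorm j ^ (s-1)) ^ 2 * ((znorm j ^ (s-1)) ^ 2 * C ^ 2) by positivity)
      nlinarith [hmul]
    have hinnerlt : Complex.re (inner ℂ (u x j) (R j x) : ℂ) < 0 := by
      rw [hRx]
      have hsub2 : (inner ℂ (u x j) (Nfun (u x) j - ((ν * znorm j ^ 2 : ℝ) : ℂ) • u x j) : ℂ)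
          = inner ℂ (u x j) (Nfun (u x) j) - inner ℂ (u x j) (((ν * znorm j ^ 2 : ℝ) : ℂ) • u x j) :=
        inner_sub_right _ _ _
      rw [hsub2, Complex.sub_re, hsmul]
      linarith
    have hDval : D j x = w j * (2 * Complex.re (inner ℂ (u x j) (R j x) : ℂ)) := by
      rw [hD]
      dsimp only
      rw [hre]
    rw [hDval]
    exact mul_neg_of_pos_of_neg (hwpos j hj0) (by linarith)
  -- initial condition
  have hinitF : F t₀ ≤ C ^ 2 := by
    apply Finset.sup'_le
    intro j hj
    obtain ⟨hj0, hjn⟩ := hKmem j hj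
    have hzs : 0 < znorm j ^ s := Real.rpow_pos_of_pos (znorm_pos hj0) s
    exact (sq_le_iff' hzs (norm_nonneg _) hC.le).2 (hinit j hj0)
  -- fencing
  have happl := image_le_of_liminf_slope_right_lt_deriv_boundary (f := F) (f' := f')
    (a := t₀) (b := t) (B := fun _ => C ^ 2) (B' := fun _ => 0)
    hFcont.continuousOn
    (fun x _ r hr => ((hslope x r hr).frequently))
    hinitF (fun x => hasDerivAt_const x _)
    (fun x _ hFx => hbound x hFx)
  have hFt : F t ≤ C ^ 2 := happl (Set.right_mem_Icc.2 ht)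
  have h1 : G k t ≤ C ^ 2 := le_trans (Finset.le_sup' (fun j => G j t) hkK) hFt
  have hzs : 0 < znorm k ^ s := Real.rpow_pos_of_pos hkp s
  exact (sq_le_iff' hzs (norm_nonneg _) hC.le).1 h1

end NSaux

/-- 3D trapping region `Z(C,s)` for the unforced equation: there is `C₂ = C₂(s) > 0`
such that (i) `|N_k(u)| ≤ C₂ C²/|k|^{s-1}` on divergence-free elements of `Z(C,s)`, and
(ii) for `0 < C < ν/C₂` the set of real divergence-free sequences in `Z(C,s)` is
forward invariant for every symmetric Galerkin projection with `f ≡ 0`. -/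
theorem trapping_region_3d_unforced (ν s : ℝ) (hν : 0 < ν) (hs : 3 < s) :
    ∃ C₂ : ℝ, 0 < C₂ ∧
      ((∀ C : ℝ, 0 < C →
        ∀ u : (Fin 3 → ℤ) → EuclideanSpace ℂ (Fin 3),
          divFree u → u 0 = 0 →
          (∀ k : Fin 3 → ℤ, k ≠ 0 → ‖u k‖ ≤ C / znorm k ^ s) →
          ∀ k : Fin 3 → ℤ, k ≠ 0 → ‖Nfun u k‖ ≤ C₂ * C^2 / znorm k ^ (s - 1)) ∧
      (∀ C : ℝ, 0 < C → C < ν / C₂ → ∀ n : ℝ, 1 ≤ n →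
        ∀ u : ℝ → (Fin 3 → ℤ) → EuclideanSpace ℂ (Fin 3),
          IsGalerkinSol ν n (fun _ _ => 0) u →
          (∀ t, realSeq (u t)) → (∀ t, divFree (u t)) →
          ∀ t₀, (∀ k : Fin 3 → ℤ, k ≠ 0 → ‖u t₀ k‖ ≤ C / znorm k ^ s) →
          ∀ t, t₀ ≤ t → ∀ k : Fin 3 → ℤ, k ≠ 0 → ‖u t k‖ ≤ C / znorm k ^ s)) := by
  have hC₂pos : (0:ℝ) < 2 ^ (s+1) * NSaux.Sc s :=
    mul_pos (Real.rpow_pos_of_pos two_pos _) (lt_of_lt_of_le one_pos (NSaux.one_le_Sc hs))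
  refine ⟨2 ^ (s+1) * NSaux.Sc s, hC₂pos, ?_, ?_⟩
  · intro C hC u _ hu0 hu k hk
    exact NSaux.Nfun_bound hs hC u hu0 hu hk
  · intro C hC hCν n hn u hsol _ _ t₀ hinit t ht k hk
    exact NSaux.invariance hν hs hC₂pos
      (fun C' hC' v hv0 hvb k' hk' => NSaux.Nfun_bound hs hC' v hv0 hvb hk')
      C hC hCν n hn u hsol t₀ hinit t ht k hk
end
end
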